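/- A geodesic triangle on the unit 2-sphere with all three angles at most π/2 is contained in a closed octant of the sphere. -/

import Mathlib

/-- The minimizing great-circle arc between two (non-antipodal) unit vectors `a, b`:
the unit vectors that are nonnegative linear combinations of `a` and `b`. -/
def sphArc (a b : EuclideanSpace ℝ (Fin 3)) : Set (EuclideanSpace ℝ (Fin 3)) :=
  {x | ‖x‖ = 1 ∧ ∃ s t : ℝ, 0 ≤ s ∧ 0 ≤ t ∧ x = s • a + t • b}

/-- The spherical angle of the geodesic triangle `a b c` on the unit sphere at the
vertex `a`. -/
noncomputable def sphAngle (a b c : EuclideanSpace ℝ (Fin 3)) : ℝ :=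
  InnerProductGeometry.angle (b - (inner ℝ b a : ℝ) • a) (c - (inner ℝ c a : ℝ) • a)

lemma aux_inner_nonneg_of_angle (x y : EuclideanSpace ℝ (Fin 3))
    (h : InnerProductGeometry.angle x y ≤ Real.pi / 2) : 0 ≤ (inner ℝ x y : ℝ) := by
  rw [InnerProductGeometry.angle, Real.arccos_le_pi_div_two] at h
  rcases eq_or_ne x 0 with rfl | hx
  · simp
  rcases eq_or_ne y 0 with rfl | hy
  · simp
  have hx' : 0 < ‖x‖ := norm_pos_iff.mpr hx
  have hy' : 0 < ‖y‖ := norm_pos_iff.mpr hy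
  have := mul_nonneg h (le_of_lt (mul_pos hx' hy'))
  rwa [div_mul_cancel₀] at this
  positivity

lemma aux_inner3 (x y : EuclideanSpace ℝ (Fin 3)) :
    (inner ℝ x y : ℝ) = x 0 * y 0 + x 1 * y 1 + x 2 * y 2 := by
  simp [PiLp.inner_apply, Fin.sum_univ_three, RCLike.inner_apply]
  ring

lemma aux_signs (p q r : ℝ) (h1 : r*q ≤ p) (h2 : r*p ≤ q) (h3 : q*p ≤ r)
    (bp : p < 1) (bq : q < 1) (br : r < 1) (bq' : -1 < q) (br' : -1 < r) :
    0 ≤ q ∧ 0 ≤ r := by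
  constructor
  · by_contra hq
    push_neg at hq
    rcases lt_or_ge p 0 with hp | hp
    · nlinarith
    · rcases lt_or_ge r 0 with hr | hr
      · nlinarith
      · nlinarith
  · by_contra hr
    push_neg at hr
    rcases lt_or_ge p 0 with hp | hp
    · nlinarith
    · rcases lt_or_ge q 0 with hq | hq
      · nlinarith
      · nlinarith

set_option maxHeartbeats 2000000 in
/-- A geodesic triangle on the unit 2-sphere with all three angles at most `π/2` is
contained in a closed octant: there is an orthonormal basis with respect to which
every point of the three sides has nonnegative coordinates. -/
theorem stmt13 (a b c : EuclideanSpace ℝ (Fin 3))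
    (ha : ‖a‖ = 1) (hb : ‖b‖ = 1) (hc : ‖c‖ = 1)
    (hab : a ≠ b) (hbc : b ≠ c) (hac : a ≠ c)
    (hab' : a ≠ -b) (hbc' : b ≠ -c) (hac' : a ≠ -c)
    (hA : sphAngle a b c ≤ Real.pi / 2)
    (hB : sphAngle b a c ≤ Real.pi / 2)
    (hC : sphAngle c a b ≤ Real.pi / 2) :
    ∃ B : OrthonormalBasis (Fin 3) ℝ (EuclideanSpace ℝ (Fin 3)),
      ∀ x ∈ sphArc a b ∪ sphArc b c ∪ sphArc a c, ∀ i, 0 ≤ (inner ℝ (B i) x : ℝ) := by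
  set r : ℝ := inner ℝ a b with hr
  set q : ℝ := inner ℝ a c with hq
  set p : ℝ := inner ℝ b c with hp
  have haa : (inner ℝ a a : ℝ) = 1 := by
    rw [real_inner_self_eq_norm_mul_norm, ha]; norm_num
  have hbb : (inner ℝ b b : ℝ) = 1 := by
    rw [real_inner_self_eq_norm_mul_norm, hb]; norm_num
  have hcc : (inner ℝ c c : ℝ) = 1 := by
    rw [real_inner_self_eq_norm_mul_norm, hc]; norm_num
  -- strict bounds
  have hbound : ∀ x y : EuclideanSpace ℝ (Fin 3), ‖x‖ = 1 → ‖y‖ = 1 → x ≠ y → x ≠ -y →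
      (inner ℝ x y : ℝ) < 1 ∧ -1 < (inner ℝ x y : ℝ) := by
    intro x y hx hy hxy hxy'
    constructor
    · have h1 : 0 < ‖x - y‖ := norm_pos_iff.mpr (sub_ne_zero.mpr hxy)
      have h2 : ‖x - y‖ ^ 2 = 2 - 2 * (inner ℝ x y : ℝ) := by
        rw [norm_sub_sq_real, hx, hy]; ring
      nlinarith
    · have h1 : 0 < ‖x + y‖ := by
        rw [norm_pos_iff]
        intro h
        exact hxy' (by rw [eq_neg_iff_add_eq_zero]; exact h)
      have h2 : ‖x + y‖ ^ 2 = 2 + 2 * (inner ℝ x y : ℝ) := by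
        rw [norm_add_sq_real, hx, hy]; ring
      nlinarith
  obtain ⟨hr1, hr1'⟩ := hbound a b ha hb hab hab'
  obtain ⟨hq1, hq1'⟩ := hbound a c ha hc hac hac'
  obtain ⟨hp1, hp1'⟩ := hbound b c hb hc hbc hbc'
  -- angle conditions give inner ℝ inequalities
  have hexp : ∀ x y z : EuclideanSpace ℝ (Fin 3), (inner ℝ x x : ℝ) = 1 →
      (inner ℝ (y - (inner ℝ y x : ℝ) • x) (z - (inner ℝ z x : ℝ) • x) : ℝ)
        = (inner ℝ y z : ℝ) - (inner ℝ x y : ℝ) * (inner ℝ x z : ℝ) := by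
    intro x y z hxx
    simp only [inner_sub_left, inner_sub_right, real_inner_smul_left, real_inner_smul_right, hxx]
    rw [real_inner_comm y x, real_inner_comm z x]
    ring
  have hA2 : 0 ≤ p - r * q := by
    have h := aux_inner_nonneg_of_angle _ _ hA
    rwa [hexp a b c haa] at h
  have hcba : (inner ℝ b a : ℝ) = r := by rw [real_inner_comm]
  have hcca : (inner ℝ c a : ℝ) = q := by rw [real_inner_comm]
  have hccb : (inner ℝ c b : ℝ) = p := by rw [real_inner_comm]
  have hB2 : 0 ≤ q - r * p := by
    have h := aux_inner_nonneg_of_angle _ _ hB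
    rw [hexp b a c hbb, hcba, ← hq, ← hp] at h
    linarith
  have hC2 : 0 ≤ r - q * p := by
    have h := aux_inner_nonneg_of_angle _ _ hC
    rw [hexp c a b hcc, hcca, hccb, ← hr] at h
    linarith
  obtain ⟨hq0, hr0⟩ := aux_signs p q r (by linarith) (by linarith) (by linarith)
    hp1 hq1 hr1 hq1' hr1'
  have h1r2 : 0 < 1 - r ^ 2 := by
    have h2 : r ^ 2 < 1 := by
      rw [sq_lt_one_iff_abs_lt_one, abs_lt]
      exact ⟨hr1', hr1⟩
    linarith
  -- normal vector
  set n : EuclideanSpace ℝ (Fin 3) := (WithLp.equiv 2 (Fin 3 → ℝ)).symm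
    ![a 1 * b 2 - a 2 * b 1, a 2 * b 0 - a 0 * b 2, a 0 * b 1 - a 1 * b 0] with hn
  have hn0 : n 0 = a 1 * b 2 - a 2 * b 1 := rfl
  have hn1 : n 1 = a 2 * b 0 - a 0 * b 2 := rfl
  have hn2 : n 2 = a 0 * b 1 - a 1 * b 0 := rfl
  have haa' : a 0 * a 0 + a 1 * a 1 + a 2 * a 2 = 1 := by rw [← aux_inner3]; exact haa
  have hbb' : b 0 * b 0 + b 1 * b 1 + b 2 * b 2 = 1 := by rw [← aux_inner3]; exact hbb
  have hr' : r = a 0 * b 0 + a 1 * b 1 + a 2 * b 2 := by rw [hr]; exact aux_inner3 a b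
  have hna : (inner ℝ n a : ℝ) = 0 := by
    rw [aux_inner3, hn0, hn1, hn2]; ring
  have hnb : (inner ℝ n b : ℝ) = 0 := by
    rw [aux_inner3, hn0, hn1, hn2]; ring
  have hnn : (inner ℝ n n : ℝ) = 1 - r ^ 2 := by
    rw [aux_inner3, hn0, hn1, hn2, hr']
    linear_combination (b 0 * b 0 + b 1 * b 1 + b 2 * b 2) * haa' + hbb'
  set k : ℝ := Real.sqrt (1 - r ^ 2) with hk
  have hk2 : k ^ 2 = 1 - r ^ 2 := Real.sq_sqrt (le_of_lt h1r2)
  have hkpos : 0 < k := Real.sqrt_pos.mpr h1r2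
  set σ : ℝ := if 0 ≤ (inner ℝ n c : ℝ) then 1 else -1 with hσ
  have hσ2 : σ * σ = 1 := by rw [hσ]; split <;> norm_num
  have hσc : 0 ≤ σ * (inner ℝ n c : ℝ) := by
    rw [hσ]
    rcases le_or_gt 0 (inner ℝ n c : ℝ) with h | h
    · rw [if_pos h]; simpa using h
    · rw [if_neg (not_le.mpr h)]; linarith
  set f : Fin 3 → EuclideanSpace ℝ (Fin 3) :=
    ![a, k⁻¹ • (b - r • a), (σ * k⁻¹) • n] with hf
  -- inner ℝ product values
  have hab2 : (inner ℝ (b - r • a) a : ℝ) = 0 := by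
    rw [inner_sub_left, real_inner_smul_left, haa, hcba]; ring
  have hbb2 : (inner ℝ (b - r • a) b : ℝ) = 1 - r ^ 2 := by
    rw [inner_sub_left, real_inner_smul_left, hbb, ← hr]; ring
  have hbc2 : (inner ℝ (b - r • a) c : ℝ) = p - r * q := by
    rw [inner_sub_left, real_inner_smul_left, ← hp, ← hq]
  have hbb3 : (inner ℝ (b - r • a) (b - r • a) : ℝ) = 1 - r ^ 2 := by
    rw [inner_sub_right, real_inner_smul_right, hab2, hbb2]; ring
  have han : (inner ℝ a n : ℝ) = 0 := by rw [real_inner_comm]; exact hna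
  have hbn : (inner ℝ b n : ℝ) = 0 := by rw [real_inner_comm]; exact hnb
  have hban : (inner ℝ (b - r • a) n : ℝ) = 0 := by
    rw [inner_sub_left, real_inner_smul_left, hbn, han]; ring
  have hk1 : k⁻¹ * (k⁻¹ * (1 - r ^ 2)) = 1 := by
    field_simp
    linear_combination -hk2
  have h_on : Orthonormal ℝ f := by
    rw [orthonormal_iff_ite]
    intro i j
    fin_cases i <;> fin_cases j
    · show (inner ℝ a a : ℝ) = 1
      exact haa
    · show (inner ℝ a (k⁻¹ • (b - r • a)) : ℝ) = 0
      rw [real_inner_smul_right, real_inner_comm, hab2, mul_zero]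
    · show (inner ℝ a ((σ * k⁻¹) • n) : ℝ) = 0
      rw [real_inner_smul_right, han, mul_zero]
    · show (inner ℝ (k⁻¹ • (b - r • a)) a : ℝ) = 0
      rw [real_inner_smul_left, hab2, mul_zero]
    · show (inner ℝ (k⁻¹ • (b - r • a)) (k⁻¹ • (b - r • a)) : ℝ) = 1
      rw [real_inner_smul_left, real_inner_smul_right, hbb3]
      exact hk1
    · show (inner ℝ (k⁻¹ • (b - r • a)) ((σ * k⁻¹) • n) : ℝ) = 0
      rw [real_inner_smul_left, real_inner_smul_right, hban, mul_zero, mul_zero]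
    · show (inner ℝ ((σ * k⁻¹) • n) a : ℝ) = 0
      rw [real_inner_smul_left, hna, mul_zero]
    · show (inner ℝ ((σ * k⁻¹) • n) (k⁻¹ • (b - r • a)) : ℝ) = 0
      rw [real_inner_smul_left, real_inner_smul_right, real_inner_comm, hban, mul_zero, mul_zero]
    · show (inner ℝ ((σ * k⁻¹) • n) ((σ * k⁻¹) • n) : ℝ) = 1
      rw [real_inner_smul_left, real_inner_smul_right, hnn]
      calc σ * k⁻¹ * (σ * k⁻¹ * (1 - r ^ 2))
          = (σ * σ) * (k⁻¹ * (k⁻¹ * (1 - r ^ 2))) := by ring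
        _ = 1 := by rw [hσ2, hk1]; ring
  have hspan : ⊤ ≤ Submodule.span ℝ (Set.range f) :=
    (h_on.linearIndependent.span_eq_top_of_card_eq_finrank (by simp)).ge
  refine ⟨OrthonormalBasis.mk h_on hspan, ?_⟩
  have hfabc : ∀ i : Fin 3, 0 ≤ (inner ℝ (f i) a : ℝ) ∧ 0 ≤ (inner ℝ (f i) b : ℝ) ∧
      0 ≤ (inner ℝ (f i) c : ℝ) := by
    intro i
    fin_cases i <;> refine ⟨?_, ?_, ?_⟩
    · show (0:ℝ) ≤ inner ℝ a a
      rw [haa]; norm_num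
    · show (0:ℝ) ≤ inner ℝ a b
      rw [← hr]; exact hr0
    · show (0:ℝ) ≤ inner ℝ a c
      rw [← hq]; exact hq0
    · show (0:ℝ) ≤ inner ℝ (k⁻¹ • (b - r • a)) a
      rw [real_inner_smul_left, hab2, mul_zero]
    · show (0:ℝ) ≤ inner ℝ (k⁻¹ • (b - r • a)) b
      rw [real_inner_smul_left, hbb2]; positivity
    · show (0:ℝ) ≤ inner ℝ (k⁻¹ • (b - r • a)) c
      rw [real_inner_smul_left, hbc2]; positivity
    · show (0:ℝ) ≤ inner ℝ ((σ * k⁻¹) • n) a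
      rw [real_inner_smul_left, hna, mul_zero]
    · show (0:ℝ) ≤ inner ℝ ((σ * k⁻¹) • n) b
      rw [real_inner_smul_left, hnb, mul_zero]
    · show (0:ℝ) ≤ inner ℝ ((σ * k⁻¹) • n) c
      rw [real_inner_smul_left, show σ * k⁻¹ * (inner ℝ n c : ℝ)
        = k⁻¹ * (σ * (inner ℝ n c : ℝ)) from by ring]
      positivity
  intro x hx i
  rw [OrthonormalBasis.coe_mk]
  rcases hx with (⟨hx1, s, t, hs, ht, rfl⟩ | ⟨hx1, s, t, hs, ht, rfl⟩) | ⟨hx1, s, t, hs, ht, rfl⟩ <;>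
    rw [inner_add_right, real_inner_smul_right, real_inner_smul_right]
  · exact add_nonneg (mul_nonneg hs (hfabc i).1) (mul_nonneg ht (hfabc i).2.1)
  · exact add_nonneg (mul_nonneg hs (hfabc i).2.1) (mul_nonneg ht (hfabc i).2.2)
  · exact add_nonneg (mul_nonneg hs (hfabc i).1) (mul_nonneg ht (hfabc i).2.2)
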